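/- Let f and (fₙ)_{n∈ℕ} be convex functions from ℝ to ℝ with fₙ → f pointwise on ℝ. Then there exists a set D ⊆ ℝ whose complement has Lebesgue measure zero such that: (a) for every x ∈ D and every n ∈ ℕ, the function fₙ is twice differentiable at x and fₙ''(x) ≥ 0; (b) for every x ∈ D, liminf_{n→∞} fₙ''(x) < ∞. -/

import Mathlib

open Set Filter MeasureTheory Topology
open scoped ENNReal
noncomputable def rd (g : ℝ → ℝ) (x : ℝ) : ℝ := sInf (slope g x '' Set.Ioi x)

lemma slope_le_rd {g : ℝ → ℝ} (hg : ConvexOn ℝ Set.univ g) {z x : ℝ} (hzx : z < x) :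
    slope g z x ≤ rd g x := by
  rw [slope_comm]
  refine le_csInf ⟨slope g x (x+1), ⟨x+1, by simp, rfl⟩⟩ ?_
  rintro _ ⟨y, hy, rfl⟩
  exact hg.slope_mono (mem_univ x) ⟨trivial, hzx.ne⟩ ⟨trivial, (mem_Ioi.1 hy).ne'⟩
    (hzx.le.trans (mem_Ioi.1 hy).le)

lemma rd_le_slope {g : ℝ → ℝ} (hg : ConvexOn ℝ Set.univ g) {x y : ℝ} (hxy : x < y) :
    rd g x ≤ slope g x y := by
  refine csInf_le ⟨slope g x (x-1), ?_⟩ ⟨y, hxy, rfl⟩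
  rintro _ ⟨z, hz, rfl⟩
  exact hg.slope_mono (mem_univ x) ⟨trivial, by norm_num⟩
    ⟨trivial, (mem_Ioi.1 hz).ne'⟩ (by have := mem_Ioi.1 hz; linarith)

lemma rd_mono {g : ℝ → ℝ} (hg : ConvexOn ℝ Set.univ g) : Monotone (rd g) := by
  intro x y hxy
  rcases eq_or_lt_of_le hxy with rfl | h
  · rfl
  · exact (rd_le_slope hg h).trans (slope_le_rd hg h)

lemma rd_eq_deriv {g : ℝ → ℝ} (hg : ConvexOn ℝ Set.univ g) {x : ℝ}
    (hd : DifferentiableAt ℝ g x) : rd g x = deriv g x := by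
  refine le_antisymm ?_ ?_
  · have ht : Tendsto (slope g x) (𝓝[>] x) (𝓝 (deriv g x)) :=
      (hasDerivAt_iff_tendsto_slope.1 hd.hasDerivAt).mono_left
        (nhdsWithin_mono x (fun y hy => (mem_Ioi.1 hy).ne'))
    refine ge_of_tendsto ht ?_
    exact eventually_nhdsWithin_of_forall fun y hy => rd_le_slope hg (mem_Ioi.1 hy)
  · refine le_csInf ⟨slope g x (x+1), ⟨x+1, by simp, rfl⟩⟩ ?_
    rintro _ ⟨y, hy, rfl⟩
    exact hg.deriv_le_slope (mem_univ _) (mem_univ _) (mem_Ioi.1 hy) hd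

lemma convex_ae_diff {g : ℝ → ℝ} (hg : ConvexOn ℝ Set.univ g) :
    ∀ᵐ x : ℝ, DifferentiableAt ℝ g x := by
  have hcont : Continuous g := continuousOn_univ.1
    (ConvexOn.continuousOn isOpen_univ hg)
  have hk : ∀ k : ℕ, ∀ᵐ x : ℝ, x ∈ Metric.ball (0:ℝ) (k+1) → DifferentiableAt ℝ g x := by
    intro k
    have hconv : ConvexOn ℝ (Metric.ball (0:ℝ) (k+2)) g :=
      hg.subset (subset_univ _) (convex_ball _ _)
    have hbd : Bornology.IsBounded (g '' Metric.ball (0:ℝ) (k+2)) :=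
      (((isCompact_closedBall (0:ℝ) (k+2)).image hcont).isBounded).subset
        (image_mono Metric.ball_subset_closedBall)
    obtain ⟨K, hK⟩ := hconv.exists_lipschitzOnWith_of_isBounded (by norm_num : (k:ℝ)+1 < k+2) hbd
    filter_upwards [hK.ae_differentiableWithinAt_of_mem_of_real] with x hx hmem
    exact (hx hmem).differentiableAt (Metric.isOpen_ball.mem_nhds hmem)
  rw [← ae_all_iff] at hk
  filter_upwards [hk] with x hx
  obtain ⟨k, hkx⟩ := exists_nat_gt ‖x‖
  exact hx k (by simp [Real.norm_eq_abs] at hkx ⊢; linarith [abs_nonneg x, hkx])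



/-- "fₙ is twice differentiable at x" is formalized in the Alexandrov sense described in
the paper: the a.e.-defined derivative of the convex function `fn n` admits a monotone
extension `φ n` to all of `ℝ` (agreeing with `deriv (fn n)` at every point of
differentiability), `fn n` is differentiable at `x`, the extension `φ n` is differentiable
at `x`, and `fₙ''(x) := deriv (φ n) x`. -/
theorem stmt4 (f : ℝ → ℝ) (fn : ℕ → ℝ → ℝ)
    (hf : ConvexOn ℝ Set.univ f) (hfn : ∀ n, ConvexOn ℝ Set.univ (fn n))
    (hlim : ∀ x : ℝ, Filter.Tendsto (fun n => fn n x) Filter.atTop (nhds (f x))) :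
    ∃ φ : ℕ → ℝ → ℝ, (∀ n, Monotone (φ n)) ∧
      (∀ n, ∀ x : ℝ, DifferentiableAt ℝ (fn n) x → φ n x = deriv (fn n) x) ∧
      ∃ D : Set ℝ, MeasureTheory.volume Dᶜ = 0 ∧
        ∀ x ∈ D,
          (∀ n, DifferentiableAt ℝ (fn n) x ∧ DifferentiableAt ℝ (φ n) x ∧
            0 ≤ deriv (φ n) x) ∧
          Filter.liminf (fun n => ((deriv (φ n) x : ℝ) : EReal)) Filter.atTop < ⊤ := by
  set φ : ℕ → ℝ → ℝ := fun n => rd (fn n) with hφ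
  have hmono : ∀ n, Monotone (φ n) := fun n => rd_mono (hfn n)
  have hder : ∀ n, ∀ x : ℝ, DifferentiableAt ℝ (fn n) x → φ n x = deriv (fn n) x :=
    fun n x hd => rd_eq_deriv (hfn n) hd
  -- the Stieltjes measures and Radon-Nikodym derivatives
  set g : ℕ → ℝ → ℝ≥0∞ :=
    fun n x => ((hmono n).stieltjesFunction.measure.rnDeriv volume x) with hg
  have hgmeas : ∀ n, Measurable (g n) :=
    fun n => Measure.measurable_rnDeriv _ _
  have hA1 : ∀ n, ∀ᵐ x : ℝ, HasDerivAt (φ n) ((g n x).toReal) x :=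
    fun n => (hmono n).ae_hasDerivAt
  have hA2 : ∀ n, ∀ᵐ x : ℝ, DifferentiableAt ℝ (fn n) x := fun n => convex_ae_diff (hfn n)
  -- key finiteness of liminf
  have hA3 : ∀ᵐ x : ℝ, liminf (fun n => g n x) atTop < ⊤ := by
    have hk : ∀ k : ℕ, ∀ᵐ x : ℝ, x ∈ Ioo (-(k:ℝ)) k → liminf (fun n => g n x) atTop < ⊤ := by
      intro k
      set a : ℝ := -(k:ℝ) with ha
      set b : ℝ := (k:ℝ) with hb
      set c : ℝ := (f (b+2) - f (b+1)) - (f a - f (a-1)) with hc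
      -- eventual bound on the measures of Ioo a b
      have hbound : ∀ᶠ n in atTop,
          (hmono n).stieltjesFunction.measure (Ioo a b) ≤ ENNReal.ofReal (c + 1) := by
        have htc : Tendsto (fun n => (fn n (b+2) - fn n (b+1)) - (fn n a - fn n (a-1)))
            atTop (nhds c) := by
          exact (((hlim (b+2)).sub (hlim (b+1))).sub ((hlim a).sub (hlim (a-1))))
        filter_upwards [htc.eventually (gt_mem_nhds (lt_add_one c))] with n hn
        have h1 : φ n (b+1) ≤ fn n (b+2) - fn n (b+1) := by
          have := rd_le_slope (hfn n) (by linarith : (b+1) < (b+2))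
          rwa [slope_def_field, show (b+2) - (b+1) = 1 by ring, div_one] at this
        have h2 : fn n a - fn n (a-1) ≤ φ n a := by
          have := slope_le_rd (hfn n) (by linarith : a - 1 < a)
          rwa [slope_def_field, show a - (a-1) = 1 by ring, div_one] at this
        calc (hmono n).stieltjesFunction.measure (Ioo a b)
            ≤ (hmono n).stieltjesFunction.measure (Ioc a b) :=
              measure_mono Ioo_subset_Ioc_self
          _ = ENNReal.ofReal ((hmono n).stieltjesFunction b - (hmono n).stieltjesFunction a) :=
              StieltjesFunction.measure_Ioc _ _ _
          _ ≤ ENNReal.ofReal (c + 1) := by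
              apply ENNReal.ofReal_le_ofReal
              have hFb : (hmono n).stieltjesFunction b ≤ φ n (b+1) := by
                rw [(hmono n).stieltjesFunction_eq]
                exact (hmono n).rightLim_le (by linarith)
              have hFa : φ n a ≤ (hmono n).stieltjesFunction a := by
                rw [(hmono n).stieltjesFunction_eq]
                exact (hmono n).le_rightLim le_rfl
              linarith
      -- Fatou
      have hI : ∀ n, ∫⁻ x in Ioo a b, g n x ≤ (hmono n).stieltjesFunction.measure (Ioo a b) :=
        fun n => Measure.setLIntegral_rnDeriv_le _
      have hliminf : ∫⁻ x in Ioo a b, liminf (fun n => g n x) atTop ∂volume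
          ≤ ENNReal.ofReal (c + 1) := by
        refine (lintegral_liminf_le fun n => hgmeas n).trans ?_
        refine liminf_le_of_frequently_le' ?_
        exact (hbound.mono fun n hn => (hI n).trans hn).frequently
      have hne : ∫⁻ x in Ioo a b, liminf (fun n => g n x) atTop ∂volume ≠ ⊤ :=
        (hliminf.trans_lt ENNReal.ofReal_lt_top).ne
      have := ae_lt_top (Measurable.liminf fun n => hgmeas n) hne
      exact (ae_restrict_iff' measurableSet_Ioo).1 this
    rw [← ae_all_iff] at hk
    filter_upwards [hk] with x hx
    obtain ⟨k, hkx⟩ := exists_nat_gt |x|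
    exact hx k ⟨by cases abs_lt.1 hkx; linarith, (le_abs_self x).trans_lt hkx⟩
  refine ⟨φ, hmono, hder, ?_⟩
  set D : Set ℝ := {x | (∀ n, DifferentiableAt ℝ (fn n) x ∧ HasDerivAt (φ n) ((g n x).toReal) x)
    ∧ liminf (fun n => g n x) atTop < ⊤} with hD
  have hDc : volume Dᶜ = 0 := by
    have : ∀ᵐ x : ℝ, x ∈ D := by
      filter_upwards [ae_all_iff.2 hA1, ae_all_iff.2 hA2, hA3] with x h1 h2 h3
      exact ⟨fun n => ⟨h2 n, h1 n⟩, h3⟩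
    simpa [ae_iff, compl_def] using this
  refine ⟨D, hDc, fun x hx => ?_⟩
  obtain ⟨hx1, hx2⟩ := hx
  refine ⟨fun n => ⟨(hx1 n).1, (hx1 n).2.differentiableAt, ?_⟩, ?_⟩
  · rw [(hx1 n).2.deriv]; exact ENNReal.toReal_nonneg
  · set L := liminf (fun n => g n x) atTop with hL
    have hLtop : L ≠ ⊤ := hx2.ne
    have hfreq : ∃ᶠ n in atTop, g n x < L + 1 := by
      by_contra h
      rw [not_frequently] at h
      have hle : L + 1 ≤ L :=
        le_liminf_of_le (by isBoundedDefault) (h.mono fun n hn => not_lt.1 hn)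
      exact absurd hle (not_le.2 (ENNReal.lt_add_right hLtop one_ne_zero))
    have hfreq2 : ∃ᶠ n in atTop,
        ((deriv (φ n) x : ℝ) : EReal) ≤ (((L+1).toReal : ℝ) : EReal) := by
      refine hfreq.mono fun n hn => ?_
      rw [(hx1 n).2.deriv]
      exact_mod_cast ENNReal.toReal_mono (ENNReal.add_ne_top.2 ⟨hLtop, ENNReal.one_ne_top⟩) hn.le
    exact (liminf_le_of_frequently_le' hfreq2).trans_lt (EReal.coe_lt_top _)
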